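/- Let 𝔤₁₇ be the Lie algebra with nonzero brackets [e₁,e₃]=e₅, [e₁,e₄]=e₆, [e₂,e₃]=e₆ and ω = e¹∧e⁶ + e²∧e⁵ + e³∧e⁴. For the compatible complex structure J with J(e₁)=ψ₁₁e₁ − ((1+ψ₁₁²)/ψ₁₂)e₂, J(e₂)=ψ₁₂e₁ − ψ₁₁e₂, J(e₃)=ψ₁₁e₃ + 2((1+ψ₁₁²)/ψ₁₂)e₄, J(e₄)=−(ψ₁₂/2)e₃ − ψ₁₁e₄, J(e₅)=ψ₁₁e₅ + ((1+ψ₁₁²)/ψ₁₂)e₆, J(e₆)=−ψ₁₂e₅ − ψ₁₁e₆ (ψ₁₂ ≠ 0), the curvature tensor of g = ω∘J has nonzero components R¹²₁⁵ = ψ₁₁ψ₁₂, R¹²₁⁶ = 1+ψ₁₁², R¹²₂⁵ = ψ₁₂², R¹²₂⁶ = ψ₁₁ψ₁₂, and after lowering the index the single nonzero component R(e₁,e₂,e₁,e₂) = −ψ₁₂. -/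
import Mathlib


noncomputable section

/-- The underlying space ℝ⁶ of the Lie algebra 𝔤₁₇. -/
abbrev V17 : Type := Fin 6 → ℝ

/-- Standard basis vectors e₁,…,e₆ (0-indexed). -/
def e17 (i : Fin 6) : V17 := Pi.single i 1

/-- Bracket of 𝔤₁₇: [e₁,e₃]=e₅, [e₁,e₄]=e₆, [e₂,e₃]=e₆. -/
def br17 (X Y : V17) : V17 :=
  ![0, 0, 0, 0,
    X 0 * Y 2 - X 2 * Y 0,
    (X 0 * Y 3 - X 3 * Y 0) + (X 1 * Y 2 - X 2 * Y 1)]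

/-- ω = e¹∧e⁶ + e²∧e⁵ + e³∧e⁴. -/
def om17 (X Y : V17) : ℝ :=
  (X 0 * Y 5 - X 5 * Y 0) + (X 1 * Y 4 - X 4 * Y 1) + (X 2 * Y 3 - X 3 * Y 2)

/-- The compatible complex structure J on 𝔤₁₇ with parameters ψ₁₁ and ψ₁₂ ≠ 0:
J(e₁)=ψ₁₁e₁ − ((1+ψ₁₁²)/ψ₁₂)e₂, J(e₂)=ψ₁₂e₁ − ψ₁₁e₂,
J(e₃)=ψ₁₁e₃ + 2((1+ψ₁₁²)/ψ₁₂)e₄, J(e₄)=−(ψ₁₂/2)e₃ − ψ₁₁e₄,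
J(e₅)=ψ₁₁e₅ + ((1+ψ₁₁²)/ψ₁₂)e₆, J(e₆)=−ψ₁₂e₅ − ψ₁₁e₆. -/
def J17 (p q : ℝ) (X : V17) : V17 :=
  ![p * X 0 + q * X 1,
    -((1 + p ^ 2) / q) * X 0 - p * X 1,
    p * X 2 - (q / 2) * X 3,
    2 * ((1 + p ^ 2) / q) * X 2 - p * X 3,
    p * X 4 - q * X 5,
    ((1 + p ^ 2) / q) * X 4 - p * X 5]

/-- Associated metric g(X,Y) = ω(X, JY). -/
def g17 (p q : ℝ) (X Y : V17) : ℝ := om17 X (J17 p q Y)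

def N17 (p q : ℝ) (X Y : V17) : V17 :=
  ![0, 0,
    ((p^2 - 1)/2) * X 0 * Y 0 + (q^2/2) * X 1 * Y 1 + (p*q/2) * (X 1 * Y 0 + X 0 * Y 1),
    (1 + p^2) * (X 1 * Y 0 + X 0 * Y 1) + (p*(1+p^2)/q) * X 0 * Y 0 + p*q * X 1 * Y 1,
    (1 + p^2) * X 0 * Y 2 + p^2 * X 2 * Y 0 + p*q * (X 2 * Y 1 + X 1 * Y 2)
      - (q^2/2) * (X 3 * Y 1 + X 1 * Y 3) - (p*q/2) * (X 3 * Y 0 + X 0 * Y 3),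
    (1 + p^2) * X 1 * Y 2 + p^2 * X 2 * Y 1 + (p*(1+p^2)/q) * (X 2 * Y 0 + X 0 * Y 2)
      + ((1 - p^2)/2) * X 0 * Y 3 - ((1 + p^2)/2) * X 3 * Y 0 - (p*q/2) * (X 3 * Y 1 + X 1 * Y 3)]

lemma vec6_0 {α : Type*} (a b c d e f : α) : ![a,b,c,d,e,f] 0 = a := rfl
lemma vec6_1 {α : Type*} (a b c d e f : α) : ![a,b,c,d,e,f] 1 = b := rfl
lemma vec6_2 {α : Type*} (a b c d e f : α) : ![a,b,c,d,e,f] 2 = c := rfl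
lemma vec6_3 {α : Type*} (a b c d e f : α) : ![a,b,c,d,e,f] 3 = d := rfl
lemma vec6_4 {α : Type*} (a b c d e f : α) : ![a,b,c,d,e,f] 4 = e := rfl
lemma vec6_5 {α : Type*} (a b c d e f : α) : ![a,b,c,d,e,f] 5 = f := rfl

lemma koszulN (p q : ℝ) (hq : q ≠ 0) (X Y Z : V17) :
    2 * g17 p q (N17 p q X Y) Z
      = g17 p q (br17 X Y) Z + g17 p q (br17 Z X) Y + g17 p q X (br17 Z Y) := by
  simp only [g17, om17, J17, N17, br17, vec6_0, vec6_1, vec6_2, vec6_3, vec6_4, vec6_5]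
  field_simp
  ring

lemma recon0 (p q : ℝ) (hq : q ≠ 0) (W : V17) :
    q * g17 p q W (e17 4) + p * g17 p q W (e17 5) = W 0 := by
  simp only [g17, om17, J17, e17, Pi.single_apply, Fin.reduceEq, reduceIte, vec6_0, vec6_1, vec6_2, vec6_3, vec6_4, vec6_5]
  field_simp
  ring

lemma recon1 (p q : ℝ) (hq : q ≠ 0) (W : V17) :
    -(p * g17 p q W (e17 4)) - ((1 + p^2)/q) * g17 p q W (e17 5) = W 1 := by
  simp only [g17, om17, J17, e17, Pi.single_apply, Fin.reduceEq, reduceIte, vec6_0, vec6_1, vec6_2, vec6_3, vec6_4, vec6_5]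
  field_simp
  ring

lemma recon2 (p q : ℝ) (hq : q ≠ 0) (W : V17) :
    (q/2) * g17 p q W (e17 2) + p * g17 p q W (e17 3) = W 2 := by
  simp only [g17, om17, J17, e17, Pi.single_apply, Fin.reduceEq, reduceIte, vec6_0, vec6_1, vec6_2, vec6_3, vec6_4, vec6_5]
  field_simp
  ring

lemma recon3 (p q : ℝ) (hq : q ≠ 0) (W : V17) :
    p * g17 p q W (e17 2) + 2*((1 + p^2)/q) * g17 p q W (e17 3) = W 3 := by
  simp only [g17, om17, J17, e17, Pi.single_apply, Fin.reduceEq, reduceIte, vec6_0, vec6_1, vec6_2, vec6_3, vec6_4, vec6_5]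
  field_simp
  ring

lemma recon4 (p q : ℝ) (hq : q ≠ 0) (W : V17) :
    q * g17 p q W (e17 0) - p * g17 p q W (e17 1) = W 4 := by
  simp only [g17, om17, J17, e17, Pi.single_apply, Fin.reduceEq, reduceIte, vec6_0, vec6_1, vec6_2, vec6_3, vec6_4, vec6_5]
  field_simp
  ring

lemma recon5 (p q : ℝ) (hq : q ≠ 0) (W : V17) :
    p * g17 p q W (e17 0) - ((1 + p^2)/q) * g17 p q W (e17 1) = W 5 := by
  simp only [g17, om17, J17, e17, Pi.single_apply, Fin.reduceEq, reduceIte, vec6_0, vec6_1, vec6_2, vec6_3, vec6_4, vec6_5]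
  field_simp
  ring

lemma g_ext (p q : ℝ) (hq : q ≠ 0) (W W' : V17)
    (h : ∀ Z, g17 p q W Z = g17 p q W' Z) : W = W' := by
  funext i
  fin_cases i
  · show W 0 = W' 0
    rw [← recon0 p q hq W, h, h, recon0 p q hq W']
  · show W 1 = W' 1
    rw [← recon1 p q hq W, h, h, recon1 p q hq W']
  · show W 2 = W' 2
    rw [← recon2 p q hq W, h, h, recon2 p q hq W']
  · show W 3 = W' 3
    rw [← recon3 p q hq W, h, h, recon3 p q hq W']
  · show W 4 = W' 4
    rw [← recon4 p q hq W, h, h, recon4 p q hq W']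
  · show W 5 = W' 5
    rw [← recon5 p q hq W, h, h, recon5 p q hq W']

lemma masterN (p q : ℝ) (hq : q ≠ 0) (X Y Z W : V17) :
    g17 p q (N17 p q X (N17 p q Y Z) - N17 p q Y (N17 p q X Z) - N17 p q (br17 X Y) Z) W
      = -q * (X 0 * Y 1 - X 1 * Y 0) * (Z 0 * W 1 - Z 1 * W 0) := by
  simp only [g17, om17, J17, N17, br17, Pi.sub_apply, vec6_0, vec6_1, vec6_2, vec6_3, vec6_4, vec6_5]
  field_simp
  ring

lemma factor1 (i j : Fin 6) (h : ({i, j} : Finset (Fin 6)) ≠ {0, 1}) :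
    e17 i 0 * e17 j 1 - e17 i 1 * e17 j 0 = 0 := by
  fin_cases i <;> fin_cases j <;>
    first
      | exact absurd (by decide) h
      | norm_num [e17, Pi.single_apply, Fin.ext_iff]

/-- the curvature tensor of g = ω∘J on 𝔤₁₇ has components
R¹²₁⁵ = ψ₁₁ψ₁₂, R¹²₁⁶ = 1+ψ₁₁², R¹²₂⁵ = ψ₁₂², R¹²₂⁶ = ψ₁₁ψ₁₂, and after lowering
the index the single nonzero component is R(e₁,e₂,e₁,e₂) = −ψ₁₂. -/
theorem g17_curvature (p q : ℝ) (hq : q ≠ 0)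
    (nabla : V17 → V17 → V17)
    (hkoszul : ∀ X Y Z : V17,
      2 * g17 p q (nabla X Y) Z
        = g17 p q (br17 X Y) Z + g17 p q (br17 Z X) Y + g17 p q X (br17 Z Y))
    (R : V17 → V17 → V17 → V17)
    (hR : ∀ X Y Z : V17,
      R X Y Z = nabla X (nabla Y Z) - nabla Y (nabla X Z) - nabla (br17 X Y) Z) :
    R (e17 0) (e17 1) (e17 0) 4 = p * q ∧
    R (e17 0) (e17 1) (e17 0) 5 = 1 + p ^ 2 ∧
    R (e17 0) (e17 1) (e17 1) 4 = q ^ 2 ∧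
    R (e17 0) (e17 1) (e17 1) 5 = p * q ∧
    g17 p q (R (e17 0) (e17 1) (e17 0)) (e17 1) = -q ∧
    (∀ i j k l : Fin 6,
      ¬(({i, j} : Finset (Fin 6)) = {0, 1} ∧ ({k, l} : Finset (Fin 6)) = {0, 1}) →
      g17 p q (R (e17 i) (e17 j) (e17 k)) (e17 l) = 0) := by
  have hn : ∀ X Y, nabla X Y = N17 p q X Y := by
    intro X Y
    refine g_ext p q hq _ _ (fun Z => ?_)
    have h1 := hkoszul X Y Z
    have h2 := koszulN p q hq X Y Z
    linarith
  have hRe : ∀ X Y Z, R X Y Z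
      = N17 p q X (N17 p q Y Z) - N17 p q Y (N17 p q X Z) - N17 p q (br17 X Y) Z := by
    intro X Y Z; rw [hR]; simp only [hn]
  have hmas : ∀ X Y Z W, g17 p q (R X Y Z) W
      = -q * (X 0 * Y 1 - X 1 * Y 0) * (Z 0 * W 1 - Z 1 * W 0) := by
    intro X Y Z W; rw [hRe]; exact masterN p q hq X Y Z W
  refine ⟨?_, ?_, ?_, ?_, ?_, ?_⟩
  · rw [hRe]
    simp only [N17, br17, e17, Pi.single_apply, Fin.reduceEq, reduceIte, Pi.sub_apply,
      vec6_0, vec6_1, vec6_2, vec6_3, vec6_4, vec6_5]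
    field_simp
    ring
  · rw [hRe]
    simp only [N17, br17, e17, Pi.single_apply, Fin.reduceEq, reduceIte, Pi.sub_apply,
      vec6_0, vec6_1, vec6_2, vec6_3, vec6_4, vec6_5]
    field_simp
    ring
  · rw [hRe]
    simp only [N17, br17, e17, Pi.single_apply, Fin.reduceEq, reduceIte, Pi.sub_apply,
      vec6_0, vec6_1, vec6_2, vec6_3, vec6_4, vec6_5]
    field_simp
    ring
  · rw [hRe]
    simp only [N17, br17, e17, Pi.single_apply, Fin.reduceEq, reduceIte, Pi.sub_apply,
      vec6_0, vec6_1, vec6_2, vec6_3, vec6_4, vec6_5]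
    field_simp
    ring
  · rw [hmas]
    simp only [e17, Pi.single_apply, Fin.reduceEq, reduceIte]
    ring
  · intro i j k l h
    rw [hmas]
    rcases not_and_or.mp h with h1 | h1
    · rw [factor1 i j h1]; ring
    · rw [factor1 k l h1]; ring
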